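/- Every delay-free principal left ideal of R = A[z;σ] has a unique generator that is left-reduced and normalized (each nonzero component e_k·g has a primitive idempotent as leading z-coefficient). -/

import Mathlib

open Polynomial

/-- The skew multiplication of A[z;σ]: a*z = z*σ(a). -/
noncomputable def skewMul {F A : Type*} [CommRing F] [CommRing A] [Algebra F A]
    (σ : A ≃ₐ[F] A) (g h : Polynomial A) : Polynomial A :=
  ∑ ν ∈ g.support, ∑ μ ∈ h.support,
    Polynomial.monomial (ν + μ) ((σ ^ μ) (g.coeff ν) * h.coeff μ)

/-- m is the leading monomial z^{deg f} e_j of f (j the largest index with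
e_j · leadingCoeff f ≠ 0), with respect to the term-over-position order. -/
def IsLM {A : Type*} [CommRing A] {r : ℕ} (e : Fin r → A) (f m : Polynomial A) : Prop :=
  ∃ j : Fin r, m = Polynomial.monomial f.natDegree (e j) ∧
    e j * f.leadingCoeff ≠ 0 ∧ ∀ l : Fin r, j < l → e l * f.leadingCoeff = 0

/-- g is left-reduced: for k ≠ l, no nonzero term z^μ e_j · (e_k g)_μ of the component
e_k·g is right divisible by the leading monomial of the component e_l·g. -/
def LeftReduced {F A : Type*} [CommRing F] [CommRing A] [Algebra F A] {r : ℕ}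
    (σ : A ≃ₐ[F] A) (e : Fin r → A) (g : Polynomial A) : Prop :=
  ∀ k l : Fin r, k ≠ l →
    skewMul σ (Polynomial.C (e k)) g ≠ 0 → skewMul σ (Polynomial.C (e l)) g ≠ 0 →
    ∀ (μ : ℕ) (j : Fin r),
      e j * (skewMul σ (Polynomial.C (e k)) g).coeff μ ≠ 0 →
      ∀ m : Polynomial A, IsLM e (skewMul σ (Polynomial.C (e l)) g) m →
        ¬ ∃ h : Polynomial A,
          Polynomial.monomial μ (e j * (skewMul σ (Polynomial.C (e k)) g).coeff μ)
            = skewMul σ h m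

/-- g is normalized: each nonzero component e_k·g has a primitive idempotent as its
leading z-coefficient. -/
def Normalized {F A : Type*} [CommRing F] [CommRing A] [Algebra F A] {r : ℕ}
    (σ : A ≃ₐ[F] A) (e : Fin r → A) (g : Polynomial A) : Prop :=
  ∀ k : Fin r, skewMul σ (Polynomial.C (e k)) g ≠ 0 →
    ∃ j : Fin r, (skewMul σ (Polynomial.C (e k)) g).leadingCoeff = e j


variable {F A : Type*} [CommRing F] [CommRing A] [Algebra F A] (σ : A ≃ₐ[F] A)

theorem skewMul_coeff (g h : Polynomial A) (n : ℕ) :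
    (skewMul σ g h).coeff n =
      ∑ μ ∈ Finset.range (n + 1), (σ ^ μ) (g.coeff (n - μ)) * h.coeff μ := by
  unfold skewMul
  rw [Polynomial.finset_sum_coeff]
  simp only [Polynomial.finset_sum_coeff, Polynomial.coeff_monomial]
  rw [Finset.sum_comm]
  have hinner : ∀ μ, (∑ ν ∈ g.support,
      if ν + μ = n then (σ ^ μ) (g.coeff ν) * h.coeff μ else 0)
      = if μ ≤ n then (σ ^ μ) (g.coeff (n - μ)) * h.coeff μ else 0 := by
    intro μ
    by_cases hμ : μ ≤ n
    · rw [if_pos hμ]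
      have : ∀ ν, (ν + μ = n) = (ν = n - μ) := by
        intro ν; apply propext; omega
      simp only [this]
      rw [Finset.sum_ite_eq' g.support (n - μ) (fun ν => (σ ^ μ) (g.coeff ν) * h.coeff μ)]
      by_cases hmem : n - μ ∈ g.support
      · rw [if_pos hmem]
      · rw [if_neg hmem]
        rw [Polynomial.notMem_support_iff.mp hmem]
        simp
    · rw [if_neg hμ]
      apply Finset.sum_eq_zero
      intro ν _
      rw [if_neg (by omega)]
  simp only [hinner]
  rw [← Finset.sum_filter]
  apply Finset.sum_subset
  · intro x hx
    simp only [Finset.mem_filter] at hx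
    simp only [Finset.mem_range]
    omega
  · intro x hx hnx
    have : h.coeff x = 0 := by
      by_contra hc
      exact hnx (Finset.mem_filter.mpr ⟨Polynomial.mem_support_iff.mpr hc,
        by simp only [Finset.mem_range] at hx; omega⟩)
    rw [this, mul_zero]

theorem skewMul_zero_right (g : Polynomial A) : skewMul σ g 0 = 0 := by
  unfold skewMul; simp

theorem skewMul_zero_left (g : Polynomial A) : skewMul σ 0 g = 0 := by
  unfold skewMul; simp

theorem skewMul_add_left (f g h : Polynomial A) :
    skewMul σ (f + g) h = skewMul σ f h + skewMul σ g h := by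
  ext n
  simp only [skewMul_coeff, Polynomial.coeff_add, map_add, add_mul, Finset.sum_add_distrib]

theorem skewMul_add_right (f g h : Polynomial A) :
    skewMul σ f (g + h) = skewMul σ f g + skewMul σ f h := by
  ext n
  simp only [skewMul_coeff, Polynomial.coeff_add, mul_add, Finset.sum_add_distrib]

theorem skewMul_sub_left (f g h : Polynomial A) :
    skewMul σ (f - g) h = skewMul σ f h - skewMul σ g h := by
  ext n
  simp only [skewMul_coeff, Polynomial.coeff_sub, map_sub, sub_mul, Finset.sum_sub_distrib]

theorem skewMul_sub_right (f g h : Polynomial A) :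
    skewMul σ f (g - h) = skewMul σ f g - skewMul σ f h := by
  ext n
  simp only [skewMul_coeff, Polynomial.coeff_sub, mul_sub, Finset.sum_sub_distrib]

theorem coeff_skewMul_monomial_left (a : ℕ) (b : A) (h : Polynomial A) (n : ℕ) :
    (skewMul σ (Polynomial.monomial a b) h).coeff n =
      if a ≤ n then (σ ^ (n - a)) b * h.coeff (n - a) else 0 := by
  rw [skewMul_coeff]
  by_cases ha : a ≤ n
  · rw [if_pos ha]
    rw [Finset.sum_eq_single (n - a)]
    · rw [Polynomial.coeff_monomial, if_pos (by omega)]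
    · intro μ hμ hne
      rw [Polynomial.coeff_monomial, if_neg (by simp only [Finset.mem_range] at hμ; omega),
        map_zero, zero_mul]
    · intro hmem
      exact absurd (Finset.mem_range.mpr (by omega)) hmem
  · rw [if_neg ha]
    apply Finset.sum_eq_zero
    intro μ hμ
    rw [Polynomial.coeff_monomial, if_neg (by simp only [Finset.mem_range] at hμ; omega),
      map_zero, zero_mul]

theorem coeff_skewMul_C_left (a : A) (h : Polynomial A) (n : ℕ) :
    (skewMul σ (Polynomial.C a) h).coeff n = (σ ^ n) a * h.coeff n := by
  rw [← Polynomial.monomial_zero_left, coeff_skewMul_monomial_left]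
  simp

theorem coeff_skewMul_monomial_right (h : Polynomial A) (d : ℕ) (c : A) (n : ℕ) :
    (skewMul σ h (Polynomial.monomial d c)).coeff n =
      if d ≤ n then (σ ^ d) (h.coeff (n - d)) * c else 0 := by
  rw [skewMul_coeff]
  by_cases hd : d ≤ n
  · rw [if_pos hd]
    rw [Finset.sum_eq_single d]
    · rw [Polynomial.coeff_monomial, if_pos rfl]
    · intro μ hμ hne
      rw [Polynomial.coeff_monomial, if_neg (Ne.symm hne), mul_zero]
    · intro hmem
      exact absurd (Finset.mem_range.mpr (by omega)) hmem
  · rw [if_neg hd]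
    apply Finset.sum_eq_zero
    intro μ hμ
    rw [Polynomial.coeff_monomial, if_neg (by simp only [Finset.mem_range] at hμ; omega),
      mul_zero]

theorem sigma_pow_pow (i j : ℕ) (x : A) : (σ ^ i) ((σ ^ j) x) = (σ ^ (i + j)) x := by
  rw [pow_add, AlgEquiv.mul_apply]

theorem skewMul_monomial_monomial (a : ℕ) (b : A) (c : ℕ) (d : A) :
    skewMul σ (Polynomial.monomial a b) (Polynomial.monomial c d) =
      Polynomial.monomial (a + c) ((σ ^ c) b * d) := by
  ext n
  simp only [coeff_skewMul_monomial_left, Polynomial.coeff_monomial]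
  by_cases hn : a + c = n
  · have hna : n - a = c := by omega
    rw [if_pos hn, if_pos (show a ≤ n by omega), if_pos (show c = n - a by omega), hna]
  · rw [if_neg hn]
    by_cases ha : a ≤ n
    · rw [if_pos ha, if_neg (show ¬ c = n - a by omega), mul_zero]
    · rw [if_neg ha]

theorem skewMul_sum_left {ι : Type*} (s : Finset ι) (f : ι → Polynomial A) (h : Polynomial A) :
    skewMul σ (∑ i ∈ s, f i) h = ∑ i ∈ s, skewMul σ (f i) h := by
  induction s using Finset.cons_induction with
  | empty => simp [skewMul_zero_left]
  | cons i s hi ih => rw [Finset.sum_cons, skewMul_add_left, ih, Finset.sum_cons]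

theorem skewMul_sum_right {ι : Type*} (s : Finset ι) (g : Polynomial A) (f : ι → Polynomial A) :
    skewMul σ g (∑ i ∈ s, f i) = ∑ i ∈ s, skewMul σ g (f i) := by
  induction s using Finset.cons_induction with
  | empty => simp [skewMul_zero_right]
  | cons i s hi ih => rw [Finset.sum_cons, skewMul_add_right, ih, Finset.sum_cons]

theorem skewMul_decomp (u g : Polynomial A) :
    skewMul σ u g = ∑ ν ∈ u.support, skewMul σ (Polynomial.monomial ν (u.coeff ν)) g := by
  conv_lhs => rw [u.as_sum_support, skewMul_sum_left]

theorem skewMul_assoc (f g h : Polynomial A) :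
    skewMul σ (skewMul σ f g) h = skewMul σ f (skewMul σ g h) := by
  induction f using Polynomial.induction_on' with
  | add p q hp hq => rw [skewMul_add_left, skewMul_add_left, skewMul_add_left, hp, hq]
  | monomial a b =>
    induction g using Polynomial.induction_on' with
    | add p q hp hq =>
      rw [skewMul_add_right, skewMul_add_left, skewMul_add_left, skewMul_add_right, hp, hq]
    | monomial c d =>
      induction h using Polynomial.induction_on' with
      | add p q hp hq =>
        rw [skewMul_add_right, skewMul_add_right, skewMul_add_right, hp, hq]
      | monomial p q =>
        rw [skewMul_monomial_monomial, skewMul_monomial_monomial,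
          skewMul_monomial_monomial, skewMul_monomial_monomial]
        have h1 : (σ ^ p) ((σ ^ c) b * d) = (σ ^ p) ((σ ^ c) b) * (σ ^ p) d := map_mul _ _ _
        rw [h1, sigma_pow_pow, add_comm p c, mul_assoc, add_assoc]

structure SkewSetup (F A : Type*) [CommRing F] [CommRing A] [Algebra F A] (r : ℕ) where
  σ : A ≃ₐ[F] A
  e : Fin r → A
  π : Equiv.Perm (Fin r)
  horth : ∀ ⦃j k : Fin r⦄, j ≠ k → e j * e k = 0
  hsum : ∑ k, e k = 1
  hσe : ∀ k, σ (e k) = e (π k)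
  hinv : ∀ (j : Fin r) (x : A), e j * x = x → x ≠ 0 → ∃ y, e j * y = y ∧ y * x = e j

namespace SkewSetup

variable {F A : Type*} [CommRing F] [CommRing A] [Algebra F A] {r : ℕ}
variable (S : SkewSetup F A r)

theorem hidem (j : Fin r) : S.e j * S.e j = S.e j := by
  have h1 : ∑ k, S.e j * S.e k = S.e j := by
    rw [← Finset.mul_sum, S.hsum, mul_one]
  have h2 : ∑ k, S.e j * S.e k = S.e j * S.e j :=
    Finset.sum_eq_single_of_mem j (Finset.mem_univ j) (fun k _ hk => S.horth (Ne.symm hk))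
  rw [← h2]
  exact h1

theorem hpow : ∀ (μ : ℕ) (k : Fin r), (S.σ ^ μ) (S.e k) = S.e ((S.π ^ μ) k) := by
  intro μ
  induction μ with
  | zero => intro k; simp
  | succ n ih =>
    intro k
    rw [pow_succ, pow_succ, AlgEquiv.mul_apply, S.hσe, ih, Equiv.Perm.mul_apply]

/-- decompose: if all components of x vanish then x = 0 -/
theorem eq_zero_of_comps (x : A) (h : ∀ j, S.e j * x = 0) : x = 0 := by
  have : (∑ k, S.e k) * x = 0 := by
    rw [Finset.sum_mul]
    exact Finset.sum_eq_zero fun k _ => h k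
  rwa [S.hsum, one_mul] at this

theorem pure_unique {a b : Fin r} {x : A} (ha : S.e a * x = x) (hb : S.e b * x = x)
    (hx : x ≠ 0) : a = b := by
  by_contra hab
  apply hx
  calc x = S.e a * x := ha.symm
  _ = S.e a * (S.e b * x) := by rw [hb]
  _ = (S.e a * S.e b) * x := by ring
  _ = 0 := by rw [S.horth hab, zero_mul]

theorem pure_mul_pure {a b : Fin r} {x y : A} (ha : S.e a * x = x) (hb : S.e b * y = y)
    (hab : a ≠ b) : x * y = 0 := by
  calc x * y = (S.e a * x) * (S.e b * y) := by rw [ha, hb]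
  _ = (S.e a * S.e b) * (x * y) := by ring
  _ = 0 := by rw [S.horth hab, zero_mul]

theorem pure_sigma {a : Fin r} {x : A} (ha : S.e a * x = x) (μ : ℕ) :
    S.e ((S.π ^ μ) a) * (S.σ ^ μ) x = (S.σ ^ μ) x := by
  rw [← S.hpow, ← map_mul, ha]

end SkewSetup

section Glue

variable {F A : Type*} [CommRing F] [CommRing A] [Algebra F A] (σ : A ≃ₐ[F] A)

theorem skewMul_one_left (g : Polynomial A) : skewMul σ (Polynomial.C 1) g = g := by
  ext n
  rw [coeff_skewMul_C_left, map_one, one_mul]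

end Glue

namespace SkewSetup

variable {F A : Type*} [CommRing F] [CommRing A] [Algebra F A] {r : ℕ}
variable (S : SkewSetup F A r)

noncomputable def Ek (k : Fin r) (g : Polynomial A) : Polynomial A :=
  skewMul S.σ (Polynomial.C (S.e k)) g

theorem Ek_coeff (k : Fin r) (g : Polynomial A) (μ : ℕ) :
    (S.Ek k g).coeff μ = S.e ((S.π ^ μ) k) * g.coeff μ := by
  unfold Ek
  rw [coeff_skewMul_C_left, S.hpow]

theorem Ek_pure (k : Fin r) (g : Polynomial A) (μ : ℕ) :
    S.e ((S.π ^ μ) k) * (S.Ek k g).coeff μ = (S.Ek k g).coeff μ := by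
  rw [Ek_coeff, ← mul_assoc, S.hidem]

theorem Ek_pure' {j : Fin r} (k : Fin r) (g : Polynomial A) (μ : ℕ)
    (h : j ≠ (S.π ^ μ) k) : S.e j * (S.Ek k g).coeff μ = 0 := by
  rw [Ek_coeff, ← mul_assoc, S.horth h, zero_mul]

theorem eq_zero_of_Ek (g : Polynomial A) (h : ∀ k, S.Ek k g = 0) : g = 0 := by
  ext μ
  rw [Polynomial.coeff_zero]
  apply S.eq_zero_of_comps
  intro j
  have := congrArg (fun p => Polynomial.coeff p μ) (h ((S.π ^ μ).symm j))
  simp only [Polynomial.coeff_zero] at this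
  rw [S.Ek_coeff] at this
  rwa [Equiv.apply_symm_apply] at this

theorem Ek_sub (k : Fin r) (g g' : Polynomial A) :
    S.Ek k (g - g') = S.Ek k g - S.Ek k g' := skewMul_sub_right _ _ _ _

/-- the principal left ideal generated by g -/
def RSet (g : Polynomial A) : Set (Polynomial A) := {f | ∃ u, f = skewMul S.σ u g}

noncomputable def dk (g : Polynomial A) (k : Fin r) : ℕ := (S.Ek k g).natDegree

noncomputable def jk (g : Polynomial A) (k : Fin r) : Fin r := (S.π ^ (S.dk g k)) k

def Viol (g : Polynomial A) (k l : Fin r) (μ : ℕ) : Prop :=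
  (S.Ek k g).coeff μ ≠ 0 ∧ S.Ek l g ≠ 0 ∧ S.dk g l ≤ μ ∧ (S.π ^ μ) k = S.jk g l ∧ k ≠ l

def Red (g : Polynomial A) : Prop := ∀ k l μ, ¬ S.Viol g k l μ

def Nor (g : Polynomial A) : Prop :=
  ∀ k, S.Ek k g ≠ 0 → (S.Ek k g).leadingCoeff = S.e (S.jk g k)

theorem lc_pure (k : Fin r) (g : Polynomial A) :
    S.e (S.jk g k) * (S.Ek k g).leadingCoeff = (S.Ek k g).leadingCoeff :=
  S.Ek_pure k g _

theorem mem_RSet_self (g : Polynomial A) : g ∈ S.RSet g :=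
  ⟨Polynomial.C 1, (skewMul_one_left S.σ g).symm⟩

theorem skewMul_mem_RSet {g f : Polynomial A} (hf : f ∈ S.RSet g) (v : Polynomial A) :
    skewMul S.σ v f ∈ S.RSet g := by
  obtain ⟨u, rfl⟩ := hf
  exact ⟨skewMul S.σ v u, (skewMul_assoc S.σ v u g).symm⟩

theorem sub_mem_RSet {g f f' : Polynomial A} (hf : f ∈ S.RSet g) (hf' : f' ∈ S.RSet g) :
    f - f' ∈ S.RSet g := by
  obtain ⟨u, rfl⟩ := hf
  obtain ⟨u', rfl⟩ := hf'
  exact ⟨u - u', (skewMul_sub_left S.σ u u' g).symm⟩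

theorem RSet_eq_of_mem {g g' : Polynomial A} (h1 : g' ∈ S.RSet g) (h2 : g ∈ S.RSet g') :
    S.RSet g' = S.RSet g := by
  ext f
  constructor
  · rintro ⟨u, rfl⟩
    obtain ⟨w, rfl⟩ := h1
    exact ⟨skewMul S.σ u w, (skewMul_assoc S.σ u w g).symm⟩
  · rintro ⟨u, rfl⟩
    obtain ⟨w, rfl⟩ := h2
    exact ⟨skewMul S.σ u w, (skewMul_assoc S.σ u w g').symm⟩

theorem jk_inj {g : Polynomial A} (hred : S.Red g) {l l' : Fin r} (hl : S.Ek l g ≠ 0)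
    (hl' : S.Ek l' g ≠ 0) (hjj : S.jk g l = S.jk g l') : l = l' := by
  by_contra hne
  rcases le_total (S.dk g l) (S.dk g l') with hle | hle
  · exact hred l' l (S.dk g l')
      ⟨Polynomial.leadingCoeff_ne_zero.mpr hl', hl, hle, hjj.symm, Ne.symm hne⟩
  · exact hred l l' (S.dk g l)
      ⟨Polynomial.leadingCoeff_ne_zero.mpr hl, hl', hle, hjj, hne⟩

end SkewSetup

namespace SkewSetup

open scoped Classical

variable {F A : Type*} [CommRing F] [CommRing A] [Algebra F A] {r : ℕ}
variable (S : SkewSetup F A r)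

theorem sigma_pow_ne_zero {x : A} (hx : x ≠ 0) (m : ℕ) : (S.σ ^ m) x ≠ 0 := by
  intro h
  exact hx ((S.σ ^ m).injective (by rw [h, map_zero]))

theorem t_coeff (g : Polynomial A) (ν : ℕ) (l : Fin r) (x : A) (hx : S.e l * x = x) (n : ℕ) :
    (skewMul S.σ (Polynomial.monomial ν x) g).coeff n =
      if ν ≤ n then (S.σ ^ (n - ν)) x * (S.Ek l g).coeff (n - ν) else 0 := by
  rw [coeff_skewMul_monomial_left]
  by_cases hν : ν ≤ n
  · rw [if_pos hν, if_pos hν, S.Ek_coeff]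
    have h1 : (S.σ ^ (n - ν)) x = S.e ((S.π ^ (n - ν)) l) * (S.σ ^ (n - ν)) x :=
      (S.pure_sigma hx (n - ν)).symm
    calc (S.σ ^ (n - ν)) x * g.coeff (n - ν)
        = (S.e ((S.π ^ (n - ν)) l) * (S.σ ^ (n - ν)) x) * g.coeff (n - ν) := by rw [← h1]
      _ = (S.σ ^ (n - ν)) x * (S.e ((S.π ^ (n - ν)) l) * g.coeff (n - ν)) := by ring
  · rw [if_neg hν, if_neg hν]

theorem t_natDegree_le (g : Polynomial A) (ν : ℕ) (l : Fin r) (x : A) (hx : S.e l * x = x) :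
    (skewMul S.σ (Polynomial.monomial ν x) g).natDegree ≤ ν + S.dk g l := by
  apply Polynomial.natDegree_le_iff_coeff_eq_zero.mpr
  intro n hn
  rw [S.t_coeff g ν l x hx]
  by_cases hν : ν ≤ n
  · rw [if_pos hν]
    rw [Polynomial.coeff_eq_zero_of_natDegree_lt (show S.dk g l < n - ν by omega), mul_zero]
  · rw [if_neg hν]

theorem t_top_coeff (g : Polynomial A) (hnor : S.Nor g) (ν : ℕ) (l : Fin r) (x : A)
    (hx : S.e l * x = x) (hl : S.Ek l g ≠ 0) :
    (skewMul S.σ (Polynomial.monomial ν x) g).coeff (ν + S.dk g l) = (S.σ ^ (S.dk g l)) x := by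
  rw [S.t_coeff g ν l x hx, if_pos (by omega : ν ≤ ν + S.dk g l)]
  have h2 : ν + S.dk g l - ν = S.dk g l := by omega
  rw [h2]
  have h3 : (S.Ek l g).coeff (S.dk g l) = S.e (S.jk g l) := hnor l hl
  rw [h3]
  have h4 : S.e (S.jk g l) * (S.σ ^ (S.dk g l)) x = (S.σ ^ (S.dk g l)) x := S.pure_sigma hx _
  calc (S.σ ^ (S.dk g l)) x * S.e (S.jk g l)
      = S.e (S.jk g l) * (S.σ ^ (S.dk g l)) x := by ring
    _ = (S.σ ^ (S.dk g l)) x := h4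

theorem L1 {g : Polynomial A} (hred : S.Red g) (hnor : S.Nor g) (u : Polynomial A)
    (hu : skewMul S.σ u g ≠ 0) :
    ∃ l, S.Ek l g ≠ 0 ∧ S.dk g l ≤ (skewMul S.σ u g).natDegree ∧
      S.e (S.jk g l) * (skewMul S.σ u g).coeff ((skewMul S.σ u g).natDegree) ≠ 0 := by
  set f := skewMul S.σ u g with hf
  set t : ℕ × Fin r → Polynomial A :=
    fun p => skewMul S.σ (Polynomial.monomial p.1 (u.coeff p.1 * S.e p.2)) g with ht
  have hxpure : ∀ (p : ℕ × Fin r), S.e p.2 * (u.coeff p.1 * S.e p.2) = u.coeff p.1 * S.e p.2 := by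
    intro p
    calc S.e p.2 * (u.coeff p.1 * S.e p.2) = u.coeff p.1 * (S.e p.2 * S.e p.2) := by ring
      _ = u.coeff p.1 * S.e p.2 := by rw [S.hidem]
  -- decomposition
  have hdecomp : f = ∑ p ∈ u.support ×ˢ Finset.univ, t p := by
    rw [hf, skewMul_decomp, Finset.sum_product]
    apply Finset.sum_congr rfl
    intro ν _
    have hmono : Polynomial.monomial ν (u.coeff ν)
        = ∑ l : Fin r, Polynomial.monomial ν (u.coeff ν * S.e l) := by
      rw [← map_sum, ← Finset.mul_sum, S.hsum, mul_one]
    rw [hmono, skewMul_sum_left]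
  set T := (u.support ×ˢ Finset.univ).filter
    (fun p : ℕ × Fin r => u.coeff p.1 * S.e p.2 ≠ 0 ∧ S.Ek p.2 g ≠ 0) with hT
  have hdecomp2 : f = ∑ p ∈ T, t p := by
    rw [hdecomp, hT]
    symm
    apply Finset.sum_filter_of_ne
    intro p _ hne
    by_contra hcond
    apply hne
    by_cases h1 : u.coeff p.1 * S.e p.2 = 0
    · rw [ht]
      simp only [h1, Polynomial.monomial_zero_right]
      exact skewMul_zero_left _ _
    · have h2 : S.Ek p.2 g = 0 := by
        by_contra h2
        exact hcond ⟨h1, h2⟩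
      ext n
      rw [ht]
      simp only
      rw [S.t_coeff g p.1 p.2 _ (hxpure p), h2]
      simp
  have hTne : T.Nonempty := by
    by_contra hemp
    rw [Finset.not_nonempty_iff_eq_empty] at hemp
    rw [hemp, Finset.sum_empty] at hdecomp2
    exact hu hdecomp2
  obtain ⟨p₀, hp₀T, hp₀max⟩ :=
    T.exists_max_image (fun p => (p.1 + S.dk g p.2) * r + (S.jk g p.2 : ℕ)) hTne
  have hrpos : 0 < r := p₀.2.pos
  obtain ⟨hx₀, hE₀⟩ := (Finset.mem_filter.mp hp₀T).2
  set D := p₀.1 + S.dk g p₀.2 with hD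
  have hle : ∀ p ∈ T, p.1 + S.dk g p.2 ≤ D := by
    intro p hp
    have := hp₀max p hp
    by_contra hgt
    push_neg at hgt
    have h1 : (D + 1) * r ≤ (p.1 + S.dk g p.2) * r := Nat.mul_le_mul_right r hgt
    rw [show (D + 1) * r = D * r + r from by ring] at h1
    have h2 : (S.jk g p₀.2 : ℕ) < r := (S.jk g p₀.2).isLt
    have h3 : (S.jk g p.2 : ℕ) < r := (S.jk g p.2).isLt
    omega
  have huniq : ∀ p ∈ T, p.1 + S.dk g p.2 = D → S.jk g p.2 = S.jk g p₀.2 → p = p₀ := by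
    intro p hp hpd hpj
    have hE : S.Ek p.2 g ≠ 0 := (Finset.mem_filter.mp hp).2.2
    have h2 : p.2 = p₀.2 := S.jk_inj hred hE hE₀ hpj
    have h1 : p.1 = p₀.1 := by
      rw [h2] at hpd
      omega
    exact Prod.ext h1 h2
  have hdegle : ∀ p ∈ T, (t p).natDegree ≤ D := by
    intro p hp
    exact le_trans (S.t_natDegree_le g p.1 p.2 _ (hxpure p)) (hle p hp)
  have hfdegle : f.natDegree ≤ D := by
    rw [hdecomp2]
    exact Polynomial.natDegree_sum_le_of_forall_le T t hdegle
  have hcoefftop : S.e (S.jk g p₀.2) * f.coeff D ≠ 0 := by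
    have hsum : f.coeff D = ∑ p ∈ T, (t p).coeff D := by
      rw [hdecomp2, Polynomial.finset_sum_coeff]
    have hmain : S.e (S.jk g p₀.2) * (t p₀).coeff D = (S.σ ^ (S.dk g p₀.2)) (u.coeff p₀.1 * S.e p₀.2) := by
      rw [hD] at *
      rw [show (t p₀).coeff (p₀.1 + S.dk g p₀.2) = (S.σ ^ (S.dk g p₀.2)) (u.coeff p₀.1 * S.e p₀.2)
        from S.t_top_coeff g hnor p₀.1 p₀.2 _ (hxpure p₀) hE₀]
      exact S.pure_sigma (hxpure p₀) _
    have hothers : ∀ p ∈ T, p ≠ p₀ → S.e (S.jk g p₀.2) * (t p).coeff D = 0 := by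
      intro p hp hne
      rcases lt_or_eq_of_le (hle p hp) with hlt | heq
      · rw [Polynomial.coeff_eq_zero_of_natDegree_lt
          (lt_of_le_of_lt (S.t_natDegree_le g p.1 p.2 _ (hxpure p)) hlt), mul_zero]
      · have hEp : S.Ek p.2 g ≠ 0 := (Finset.mem_filter.mp hp).2.2
        have hjne : S.jk g p.2 ≠ S.jk g p₀.2 := by
          intro hjeq
          exact hne (huniq p hp heq hjeq)
        have htop : (t p).coeff D = (S.σ ^ (S.dk g p.2)) (u.coeff p.1 * S.e p.2) := by
          rw [← heq]
          exact S.t_top_coeff g hnor p.1 p.2 _ (hxpure p) hEp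
        rw [htop]
        have hpure : S.e (S.jk g p.2) * (S.σ ^ (S.dk g p.2)) (u.coeff p.1 * S.e p.2)
            = (S.σ ^ (S.dk g p.2)) (u.coeff p.1 * S.e p.2) := S.pure_sigma (hxpure p) _
        calc S.e (S.jk g p₀.2) * (S.σ ^ (S.dk g p.2)) (u.coeff p.1 * S.e p.2)
            = S.e (S.jk g p₀.2) * (S.e (S.jk g p.2) * (S.σ ^ (S.dk g p.2)) (u.coeff p.1 * S.e p.2)) := by
              rw [hpure]
          _ = (S.e (S.jk g p₀.2) * S.e (S.jk g p.2)) * (S.σ ^ (S.dk g p.2)) (u.coeff p.1 * S.e p.2) := by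
              ring
          _ = 0 := by rw [S.horth (Ne.symm hjne), zero_mul]
    rw [hsum, Finset.mul_sum]
    rw [Finset.sum_eq_single_of_mem p₀ hp₀T (fun p hp hne => hothers p hp hne)]
    rw [hmain]
    exact S.sigma_pow_ne_zero ((Finset.mem_filter.mp hp₀T).2.1) _
  have hfD : f.coeff D ≠ 0 := by
    intro h0
    rw [h0, mul_zero] at hcoefftop
    exact hcoefftop rfl
  have hdeg : f.natDegree = D := le_antisymm hfdegle (Polynomial.le_natDegree_of_ne_zero hfD)
  refine ⟨p₀.2, hE₀, ?_, ?_⟩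
  · rw [hdeg]
    omega
  · rw [hdeg]
    exact hcoefftop

end SkewSetup

namespace SkewSetup

variable {F A : Type*} [CommRing F] [CommRing A] [Algebra F A] {r : ℕ}
variable (S : SkewSetup F A r)

theorem comp_eq {a b : Fin r} {x : A} (ha : S.e a * x ≠ 0) (hb : S.e b * x = x) : a = b := by
  by_contra hab
  apply ha
  calc S.e a * x = S.e a * (S.e b * x) := by rw [hb]
    _ = (S.e a * S.e b) * x := by ring
    _ = 0 := by rw [S.horth hab, zero_mul]

theorem key {g g' : Polynomial A} (hRS : S.RSet g = S.RSet g') (hredg : S.Red g)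
    (hnorg : S.Nor g) (hredg' : S.Red g') (hnorg' : S.Nor g') :
    ∀ l', S.Ek l' g' ≠ 0 → S.Ek l' g ≠ 0 ∧ S.dk g l' = S.dk g' l' := by
  intro l' h'
  have hmem : S.Ek l' g' ∈ S.RSet g := by
    rw [hRS]
    exact S.skewMul_mem_RSet (S.mem_RSet_self g') (Polynomial.C (S.e l'))
  obtain ⟨u, hu⟩ := hmem
  have hune : skewMul S.σ u g ≠ 0 := by rw [← hu]; exact h'
  obtain ⟨l, hEl, hdl, hcl⟩ := S.L1 hredg hnorg u hune
  rw [← hu] at hdl hcl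
  have hjl : S.jk g l = S.jk g' l' := by
    have hpure : S.e (S.jk g' l') * (S.Ek l' g').coeff ((S.Ek l' g').natDegree)
        = (S.Ek l' g').coeff ((S.Ek l' g').natDegree) := S.Ek_pure l' g' _
    exact S.comp_eq hcl hpure
  -- now the reverse direction
  have hmem2 : S.Ek l g ∈ S.RSet g' := by
    rw [← hRS]
    exact S.skewMul_mem_RSet (S.mem_RSet_self g) (Polynomial.C (S.e l))
  obtain ⟨v, hv⟩ := hmem2
  have hvne : skewMul S.σ v g' ≠ 0 := by rw [← hv]; exact hEl
  obtain ⟨m, hEm, hdm, hcm⟩ := S.L1 hredg' hnorg' v hvne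
  rw [← hv] at hdm hcm
  have hjm : S.jk g' m = S.jk g l := by
    have hpure : S.e (S.jk g l) * (S.Ek l g).coeff ((S.Ek l g).natDegree)
        = (S.Ek l g).coeff ((S.Ek l g).natDegree) := S.Ek_pure l g _
    exact S.comp_eq hcm hpure
  have hml : m = l' := S.jk_inj hredg' hEm h' (by rw [hjm, hjl])
  rw [hml] at hdm
  have hdeq : S.dk g l = S.dk g' l' := le_antisymm hdl hdm
  have hll : l = l' := by
    have h1 : S.jk g l = (S.π ^ (S.dk g l)) l := rfl
    have h2 : S.jk g' l' = (S.π ^ (S.dk g' l')) l' := rfl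
    rw [h1, h2, hdeq] at hjl
    exact (S.π ^ (S.dk g' l')).injective hjl
  rw [← hll]
  exact ⟨hEl, by rw [hdeq, hll]⟩

theorem uniq {g g' : Polynomial A} (hRS : S.RSet g = S.RSet g') (hredg : S.Red g)
    (hnorg : S.Nor g) (hredg' : S.Red g') (hnorg' : S.Nor g') : g = g' := by
  by_contra hne
  have hsub : g - g' ≠ 0 := sub_ne_zero.mpr hne
  have hk : ∃ k, S.Ek k (g - g') ≠ 0 := by
    by_contra hall
    push_neg at hall
    exact hsub (S.eq_zero_of_Ek _ hall)
  obtain ⟨k, hwne⟩ := hk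
  set w := S.Ek k (g - g') with hw
  have hwsub : w = S.Ek k g - S.Ek k g' := S.Ek_sub k g g'
  have hkg : S.Ek k g ≠ 0 := by
    intro h0
    have hkg' : S.Ek k g' = 0 := by
      by_contra h1
      exact (S.key hRS hredg hnorg hredg' hnorg' k h1).1 h0
    rw [hwsub, h0, hkg'] at hwne
    exact hwne (by simp)
  have hkg' : S.Ek k g' ≠ 0 := by
    intro h0
    have : S.Ek k g = 0 := by
      by_contra h1
      exact (S.key hRS.symm hredg' hnorg' hredg hnorg k h1).1 h0
    exact hkg this
  have hdeq : S.dk g k = S.dk g' k := (S.key hRS hredg hnorg hredg' hnorg' k hkg').2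
  have hjeq : S.jk g k = S.jk g' k := by
    unfold jk
    rw [hdeq]
  set d := S.dk g k with hd
  have hcoeffzero : ∀ n, d ≤ n → w.coeff n = 0 := by
    intro n hn
    rcases eq_or_lt_of_le hn with heq | hlt
    · rw [hwsub, Polynomial.coeff_sub, ← heq]
      have h1 : (S.Ek k g).coeff d = S.e (S.jk g k) := hnorg k hkg
      have h2 : (S.Ek k g').coeff d = S.e (S.jk g' k) := by
        have h3 := hnorg' k hkg'
        rw [Polynomial.leadingCoeff] at h3
        rw [show (S.Ek k g').natDegree = S.dk g' k from rfl, ← hdeq] at h3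
        exact h3
      rw [h1, h2, hjeq, sub_self]
    · rw [hwsub, Polynomial.coeff_sub,
        Polynomial.coeff_eq_zero_of_natDegree_lt (show (S.Ek k g).natDegree < n from hlt),
        Polynomial.coeff_eq_zero_of_natDegree_lt
          (show (S.Ek k g').natDegree < n by
            rw [show (S.Ek k g').natDegree = S.dk g' k from rfl, ← hdeq]; exact hlt),
        sub_self]
  have hDlt : w.natDegree < d := by
    by_contra hge
    push_neg at hge
    exact (Polynomial.leadingCoeff_ne_zero.mpr hwne) (hcoeffzero _ hge)
  set D := w.natDegree with hD
  have hwmem : w ∈ S.RSet g := by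
    apply S.skewMul_mem_RSet
    apply S.sub_mem_RSet (S.mem_RSet_self g)
    rw [hRS]
    exact S.mem_RSet_self g'
  obtain ⟨u, hu⟩ := hwmem
  have hune : skewMul S.σ u g ≠ 0 := by rw [← hu]; exact hwne
  obtain ⟨l, hEl, hdl, hcl⟩ := S.L1 hredg hnorg u hune
  rw [← hu] at hdl hcl
  have hjl : S.jk g l = (S.π ^ D) k := by
    have hpure : S.e ((S.π ^ D) k) * w.coeff D = w.coeff D := S.Ek_pure k (g - g') D
    exact S.comp_eq hcl hpure
  have hlk : l ≠ k := by
    intro heq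
    rw [heq] at hdl
    omega
  have hwD : w.coeff D ≠ 0 := Polynomial.leadingCoeff_ne_zero.mpr hwne
  have hcases : (S.Ek k g).coeff D ≠ 0 ∨ (S.Ek k g').coeff D ≠ 0 := by
    by_contra hboth
    push_neg at hboth
    rw [hwsub, Polynomial.coeff_sub, hboth.1, hboth.2, sub_self] at hwD
    exact hwD rfl
  rcases hcases with hc | hc
  · exact hredg k l D ⟨hc, hEl, hdl, hjl.symm, Ne.symm hlk⟩
  · have hEl' : S.Ek l g' ≠ 0 ∧ S.dk g' l = S.dk g l :=
      S.key hRS.symm hredg' hnorg' hredg hnorg l hEl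
    have hjl' : S.jk g' l = S.jk g l := by
      unfold jk
      rw [hEl'.2]
    exact hredg' k l D ⟨hc, hEl'.1, by rw [hEl'.2]; exact hdl, by rw [hjl', hjl], Ne.symm hlk⟩
end SkewSetup

namespace SkewSetup

variable {F A : Type*} [CommRing F] [CommRing A] [Algebra F A] {r : ℕ}
variable (S : SkewSetup F A r)

theorem step {g : Polynomial A} {k l : Fin r} {μ : ℕ} (hV : S.Viol g k l μ) :
    ∃ g', S.RSet g' = S.RSet g ∧ (∀ k', k' ≠ k → S.Ek k' g' = S.Ek k' g) ∧
      (∀ n, μ < n → (S.Ek k g').coeff n = (S.Ek k g).coeff n) ∧ (S.Ek k g').coeff μ = 0 := by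
  obtain ⟨hcμ, hEl, hdlμ, hπ, hkl⟩ := hV
  set d := S.dk g l with hd
  set a := μ - d with ha
  have haμ : a + d = μ := by omega
  have hπa : (S.π ^ a) k = l := by
    apply (S.π ^ d).injective
    have h1 : (S.π ^ d) ((S.π ^ a) k) = (S.π ^ μ) k := by
      rw [← Equiv.Perm.mul_apply, ← pow_add, show d + a = μ by omega]
    rw [h1, hπ]
    rfl
  set v := (S.Ek k g).coeff μ with hv
  have hvpure : S.e (S.jk g l) * v = v := by rw [← hπ]; exact S.Ek_pure k g μ
  obtain ⟨w, hwpure, hwlc⟩ := S.hinv (S.jk g l) (S.Ek l g).leadingCoeff (S.lc_pure l g)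
    (Polynomial.leadingCoeff_ne_zero.mpr hEl)
  set γ := ((S.σ ^ d).symm) (v * w) with hγdef
  have hγ : (S.σ ^ d) γ = v * w := AlgEquiv.apply_symm_apply _ _
  have hγpure : S.e l * γ = γ := by
    apply (S.σ ^ d).injective
    rw [map_mul, S.hpow, hγ]
    have h2 : S.e ((S.π ^ d) l) * (v * w) = v * w := by
      have h3 : S.e (S.jk g l) * (v * w) = (S.e (S.jk g l) * v) * w := by ring
      rw [show (S.π ^ d) l = S.jk g l from rfl, h3, hvpure]
    exact h2
  set s := skewMul S.σ (Polynomial.monomial a γ) g with hs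
  have hscoeff : ∀ n, s.coeff n =
      if a ≤ n then (S.σ ^ (n - a)) γ * (S.Ek l g).coeff (n - a) else 0 :=
    fun n => S.t_coeff g a l γ hγpure n
  have hsμ : s.coeff μ = v := by
    rw [hscoeff μ, if_pos (by omega : a ≤ μ), show μ - a = d by omega]
    have hlc : (S.Ek l g).coeff d = (S.Ek l g).leadingCoeff := rfl
    rw [hlc, hγ]
    calc v * w * (S.Ek l g).leadingCoeff = v * (w * (S.Ek l g).leadingCoeff) := by ring
      _ = v * S.e (S.jk g l) := by rw [hwlc]
      _ = S.e (S.jk g l) * v := by ring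
      _ = v := hvpure
  have hshigh : ∀ n, μ < n → s.coeff n = 0 := by
    intro n hn
    rw [hscoeff n, if_pos (by omega : a ≤ n),
      Polynomial.coeff_eq_zero_of_natDegree_lt (show (S.Ek l g).natDegree < n - a by
        rw [show (S.Ek l g).natDegree = d from rfl]; omega), mul_zero]
  have hEks : ∀ k', k' ≠ k → S.Ek k' s = 0 := by
    intro k' hk'
    ext n
    rw [S.Ek_coeff, Polynomial.coeff_zero, hscoeff n]
    by_cases han : a ≤ n
    · rw [if_pos han]
      have hp1 : S.e ((S.π ^ (n - a)) l) * (S.σ ^ (n - a)) γ = (S.σ ^ (n - a)) γ :=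
        S.pure_sigma hγpure (n - a)
      have hne : (S.π ^ n) k' ≠ (S.π ^ (n - a)) l := by
        intro heq
        apply hk'
        have h1 : (S.π ^ n) k' = (S.π ^ (n - a)) ((S.π ^ a) k') := by
          rw [← Equiv.Perm.mul_apply, ← pow_add, show n - a + a = n by omega]
        rw [h1] at heq
        have h2 : (S.π ^ a) k' = l := (S.π ^ (n - a)).injective heq
        apply (S.π ^ a).injective
        rw [h2, hπa]
      calc S.e ((S.π ^ n) k') * ((S.σ ^ (n - a)) γ * (S.Ek l g).coeff (n - a))
          = S.e ((S.π ^ n) k') * (S.e ((S.π ^ (n - a)) l) * (S.σ ^ (n - a)) γ * (S.Ek l g).coeff (n - a)) := by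
            rw [hp1]
        _ = (S.e ((S.π ^ n) k') * S.e ((S.π ^ (n - a)) l)) * ((S.σ ^ (n - a)) γ * (S.Ek l g).coeff (n - a)) := by
            ring
        _ = 0 := by rw [S.horth hne, zero_mul]
    · rw [if_neg han, mul_zero]
  have hEkks : S.Ek k s = s := by
    ext n
    rw [S.Ek_coeff, hscoeff n]
    by_cases han : a ≤ n
    · rw [if_pos han]
      have h1 : (S.π ^ n) k = (S.π ^ (n - a)) l := by
        rw [← hπa, ← Equiv.Perm.mul_apply, ← pow_add, show n - a + a = n by omega]
      rw [h1]
      calc S.e ((S.π ^ (n - a)) l) * ((S.σ ^ (n - a)) γ * (S.Ek l g).coeff (n - a))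
          = (S.e ((S.π ^ (n - a)) l) * (S.σ ^ (n - a)) γ) * (S.Ek l g).coeff (n - a) := by ring
        _ = (S.σ ^ (n - a)) γ * (S.Ek l g).coeff (n - a) := by rw [S.pure_sigma hγpure]
    · rw [if_neg han, mul_zero]
  refine ⟨g - s, ?_, ?_, ?_, ?_⟩
  · apply S.RSet_eq_of_mem
    · exact ⟨Polynomial.C 1 - Polynomial.monomial a γ, by
        rw [skewMul_sub_left, skewMul_one_left, hs]⟩
    · have hzero : skewMul S.σ (Polynomial.monomial a γ) s = 0 := by
        rw [hs, ← skewMul_assoc, skewMul_monomial_monomial]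
        have hgg : (S.σ ^ a) γ * γ = 0 := by
          have hπal : (S.π ^ a) l ≠ l := by
            intro heq
            have h5 : l = k := (S.π ^ a).injective (by rw [heq, ← hπa])
            exact hkl h5.symm
          exact S.pure_mul_pure (S.pure_sigma hγpure a) hγpure hπal
        rw [hgg, Polynomial.monomial_zero_right, skewMul_zero_left]
      have hsg' : skewMul S.σ (Polynomial.monomial a γ) (g - s) = s := by
        rw [skewMul_sub_right, hzero, sub_zero, hs]
      refine ⟨Polynomial.C 1 + Polynomial.monomial a γ, ?_⟩
      rw [skewMul_add_left, skewMul_one_left, hsg']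
      ring
  · intro k' hk'
    rw [S.Ek_sub, hEks k' hk', sub_zero]
  · intro n hn
    rw [S.Ek_sub, Polynomial.coeff_sub, hEkks, hshigh n hn, sub_zero]
  · rw [S.Ek_sub, Polynomial.coeff_sub, hEkks, hsμ, ← hv, sub_self]

end SkewSetup

theorem coeff_iff_zero_iff {A : Type*} [CommRing A] {p q : Polynomial A}
    (h : ∀ n, p.coeff n = 0 ↔ q.coeff n = 0) : p = 0 ↔ q = 0 := by
  constructor
  · intro hp
    ext n
    rw [Polynomial.coeff_zero, ← h n, hp, Polynomial.coeff_zero]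
  · intro hq
    ext n
    rw [Polynomial.coeff_zero, h n, hq, Polynomial.coeff_zero]

theorem coeff_iff_natDegree_eq {A : Type*} [CommRing A] {p q : Polynomial A}
    (h : ∀ n, p.coeff n = 0 ↔ q.coeff n = 0) : p.natDegree = q.natDegree := by
  by_cases hp : p = 0
  · rw [hp, ((coeff_iff_zero_iff h).mp hp)]
  · have hq : q ≠ 0 := fun h0 => hp ((coeff_iff_zero_iff h).mpr h0)
    apply le_antisymm
    · apply Polynomial.le_natDegree_of_ne_zero
      intro h0
      exact (Polynomial.leadingCoeff_ne_zero.mpr hp) ((h p.natDegree).mpr h0)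
    · apply Polynomial.le_natDegree_of_ne_zero
      intro h0
      exact (Polynomial.leadingCoeff_ne_zero.mpr hq) ((h q.natDegree).mp h0)

namespace SkewSetup

variable {F A : Type*} [CommRing F] [CommRing A] [Algebra F A] {r : ℕ}
variable (S : SkewSetup F A r)

theorem red_transfer {g g' : Polynomial A}
    (hiff : ∀ k n, ((S.Ek k g').coeff n = 0 ↔ (S.Ek k g).coeff n = 0))
    (hred : S.Red g) : S.Red g' := by
  have hEkiff : ∀ k, (S.Ek k g' = 0 ↔ S.Ek k g = 0) := fun k => coeff_iff_zero_iff (hiff k)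
  have hdk : ∀ k, S.dk g' k = S.dk g k := fun k => coeff_iff_natDegree_eq (hiff k)
  intro k l μ hV
  obtain ⟨h1, h2, h3, h4, h5⟩ := hV
  apply hred k l μ
  refine ⟨fun h => h1 ((hiff k μ).mpr h), fun h => h2 ((hEkiff l).mpr h), ?_, ?_, h5⟩
  · rw [← hdk l]; exact h3
  · rw [show S.jk g l = (S.π ^ (S.dk g l)) l from rfl, ← hdk l]; exact h4

theorem normalize {g : Polynomial A} :
    ∃ g', S.RSet g' = S.RSet g ∧
      (∀ k n, ((S.Ek k g').coeff n = 0 ↔ (S.Ek k g).coeff n = 0)) ∧ S.Nor g' := by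
  classical
  have hbk : ∀ k : Fin r, ∃ b, (S.e k * b = b) ∧ (∃ y, (S.e k * y = y) ∧ y * b = S.e k) ∧
      (S.Ek k g ≠ 0 → (S.σ ^ (S.dk g k)) b * (S.Ek k g).leadingCoeff = S.e (S.jk g k)) := by
    intro k
    by_cases h : S.Ek k g = 0
    · exact ⟨S.e k, S.hidem k, ⟨S.e k, S.hidem k, S.hidem k⟩, fun hne => absurd h hne⟩
    · obtain ⟨w, hwp, hwl⟩ := S.hinv (S.jk g k) _ (S.lc_pure k g)
        (Polynomial.leadingCoeff_ne_zero.mpr h)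
      refine ⟨(S.σ ^ (S.dk g k)).symm w, ?_, ?_, fun _ => ?_⟩
      · apply (S.σ ^ (S.dk g k)).injective
        rw [map_mul, S.hpow, AlgEquiv.apply_symm_apply]
        exact hwp
      · refine ⟨(S.σ ^ (S.dk g k)).symm (S.e (S.jk g k) * (S.Ek k g).leadingCoeff), ?_, ?_⟩
        · apply (S.σ ^ (S.dk g k)).injective
          rw [map_mul, S.hpow, AlgEquiv.apply_symm_apply]
          rw [S.lc_pure k g]
          exact S.lc_pure k g
        · apply (S.σ ^ (S.dk g k)).injective
          rw [map_mul, AlgEquiv.apply_symm_apply, AlgEquiv.apply_symm_apply, S.hpow]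
          rw [S.lc_pure k g]
          calc (S.Ek k g).leadingCoeff * w = w * (S.Ek k g).leadingCoeff := by ring
            _ = S.e (S.jk g k) := hwl
      · rw [AlgEquiv.apply_symm_apply]
        exact hwl
  choose bk hbkp hbky hbkl using hbk
  choose yk hykp hykb using hbky
  set b := ∑ j, bk j with hb
  have hekb : ∀ k, S.e k * b = bk k := by
    intro k
    rw [hb, Finset.mul_sum]
    rw [Finset.sum_eq_single_of_mem k (Finset.mem_univ k)]
    · exact hbkp k
    · intro j _ hj
      calc S.e k * bk j = S.e k * (S.e j * bk j) := by rw [hbkp j]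
        _ = (S.e k * S.e j) * bk j := by ring
        _ = 0 := by rw [S.horth (Ne.symm hj), zero_mul]
  set g' := skewMul S.σ (Polynomial.C b) g with hg'
  have hcoeff : ∀ k n, (S.Ek k g').coeff n = (S.σ ^ n) (bk k) * (S.Ek k g).coeff n := by
    intro k n
    rw [S.Ek_coeff, hg', coeff_skewMul_C_left]
    have h1 : S.e ((S.π ^ n) k) * (S.σ ^ n) b = (S.σ ^ n) (bk k) := by
      rw [← S.hpow, ← map_mul, hekb]
    have h2 : S.e ((S.π ^ n) k) * (S.σ ^ n) (bk k) = (S.σ ^ n) (bk k) := S.pure_sigma (hbkp k) n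
    calc S.e ((S.π ^ n) k) * ((S.σ ^ n) b * g.coeff n)
        = (S.e ((S.π ^ n) k) * (S.σ ^ n) b) * g.coeff n := by ring
      _ = (S.σ ^ n) (bk k) * g.coeff n := by rw [h1]
      _ = (S.e ((S.π ^ n) k) * (S.σ ^ n) (bk k)) * g.coeff n := by rw [h2]
      _ = (S.σ ^ n) (bk k) * (S.e ((S.π ^ n) k) * g.coeff n) := by ring
      _ = (S.σ ^ n) (bk k) * (S.Ek k g).coeff n := by rw [S.Ek_coeff]
  have hiff : ∀ k n, ((S.Ek k g').coeff n = 0 ↔ (S.Ek k g).coeff n = 0) := by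
    intro k n
    rw [hcoeff k n]
    constructor
    · intro h0
      have h1 : (S.Ek k g).coeff n = S.e ((S.π ^ n) k) * (S.Ek k g).coeff n :=
        (S.Ek_pure k g n).symm
      rw [h1, ← S.hpow, show S.e k = yk k * bk k from (hykb k).symm, map_mul]
      calc (S.σ ^ n) (yk k) * (S.σ ^ n) (bk k) * (S.Ek k g).coeff n
          = (S.σ ^ n) (yk k) * ((S.σ ^ n) (bk k) * (S.Ek k g).coeff n) := by ring
        _ = 0 := by rw [h0, mul_zero]
    · intro h0
      rw [h0, mul_zero]
  refine ⟨g', ?_, hiff, ?_⟩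
  · apply S.RSet_eq_of_mem
    · exact ⟨Polynomial.C b, hg'⟩
    · have hyb : (∑ j, yk j) * b = 1 := by
        rw [Finset.sum_mul]
        have h1 : ∀ j, yk j * b = S.e j := by
          intro j
          rw [hb, Finset.mul_sum]
          rw [Finset.sum_eq_single_of_mem j (Finset.mem_univ j)]
          · exact hykb j
          · intro i _ hi
            exact S.pure_mul_pure (hykp j) (hbkp i) (Ne.symm hi)
        rw [Finset.sum_congr rfl (fun j _ => h1 j), S.hsum]
      refine ⟨Polynomial.C (∑ j, yk j), ?_⟩
      rw [hg', ← skewMul_assoc, ← Polynomial.monomial_zero_left, ← Polynomial.monomial_zero_left,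
        skewMul_monomial_monomial]
      rw [show ((S.σ : A ≃ₐ[F] A) ^ 0) (∑ j, yk j) = ∑ j, yk j from by rw [pow_zero]; rfl]
      rw [hyb]
      rw [Polynomial.monomial_zero_left, skewMul_one_left]
  · intro k hk'
    have hkg : S.Ek k g ≠ 0 := fun h0 => hk' ((coeff_iff_zero_iff (hiff k)).mpr h0)
    have hdeq : S.dk g' k = S.dk g k := coeff_iff_natDegree_eq (hiff k)
    have hlc : (S.Ek k g').leadingCoeff = (S.σ ^ (S.dk g k)) (bk k) * (S.Ek k g).leadingCoeff := by
      rw [Polynomial.leadingCoeff, show (S.Ek k g').natDegree = S.dk g' k from rfl, hdeq,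
        hcoeff k (S.dk g k)]
      rfl
    rw [hlc, hbkl k hkg]
    rw [show S.jk g' k = (S.π ^ (S.dk g' k)) k from rfl, hdeq]
    rfl

end SkewSetup

theorem sum_two_pow (m : ℕ) : ∑ i ∈ Finset.range m, 2^i = 2^m - 1 := by
  induction m with
  | zero => simp
  | succ n ih =>
    rw [Finset.sum_range_succ, ih]
    have h1 : 1 ≤ 2^n := Nat.one_le_two_pow
    have h2 : (2:ℕ)^(n+1) = 2^n + 2^n := by ring
    omega

namespace SkewSetup

open scoped Classical

variable {F A : Type*} [CommRing F] [CommRing A] [Algebra F A] {r : ℕ}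
variable (S : SkewSetup F A r)

noncomputable def enc (g : Polynomial A) (k : Fin r) : ℕ :=
  if S.Ek k g = 0 then 0 else S.dk g k * r + (S.jk g k : ℕ) + 1

noncomputable def m1 (g : Polynomial A) : ℕ := ∑ k, S.enc g k

def PV (g : Polynomial A) (k : Fin r) (μ : ℕ) : Prop := ∃ l, S.Viol g k l μ

noncomputable def m2 (g : Polynomial A) : ℕ :=
  ∑ k, ∑ μ ∈ Finset.range (S.dk g k + 1), if S.PV g k μ then 2^μ else 0

theorem Ek_ne_zero_of_viol {g : Polynomial A} {k l : Fin r} {μ : ℕ} (hV : S.Viol g k l μ) :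
    S.Ek k g ≠ 0 := fun h0 => hV.1 (by rw [h0, Polynomial.coeff_zero])

theorem natDegree_eq_of_coeff {p : Polynomial A} {d : ℕ} (h1 : p.coeff d ≠ 0)
    (h2 : ∀ n, d < n → p.coeff n = 0) : p.natDegree = d :=
  le_antisymm (Polynomial.natDegree_le_iff_coeff_eq_zero.mpr h2)
    (Polynomial.le_natDegree_of_ne_zero h1)

/-- Case analysis data after a reduction step with μ = dk g k : m1 decreases. -/
theorem m1_lt {g g' : Polynomial A} {k : Fin r} {μ : ℕ}
    (hEk : S.Ek k g ≠ 0) (hμ : μ = S.dk g k)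
    (hother : ∀ k', k' ≠ k → S.Ek k' g' = S.Ek k' g)
    (hhigh : ∀ n, μ < n → (S.Ek k g').coeff n = (S.Ek k g).coeff n)
    (hzero : (S.Ek k g').coeff μ = 0) : S.m1 g' < S.m1 g := by
  have hallz : ∀ n, S.dk g k ≤ n → (S.Ek k g').coeff n = 0 := by
    intro n hn
    rcases eq_or_lt_of_le hn with heq | hlt
    · rw [← heq, ← hμ]
      exact hzero
    · rw [hhigh n (by omega)]
      exact Polynomial.coeff_eq_zero_of_natDegree_lt hlt
  have hk : S.enc g' k < S.enc g k := by
    have hencg : S.enc g k = S.dk g k * r + (S.jk g k : ℕ) + 1 := if_neg hEk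
    by_cases h0 : S.Ek k g' = 0
    · rw [enc, if_pos h0, hencg]
      omega
    · have hlt : S.dk g' k < S.dk g k := by
        have h1 : (S.Ek k g').coeff (S.dk g' k) ≠ 0 :=
          Polynomial.leadingCoeff_ne_zero.mpr h0
        by_contra hge
        push_neg at hge
        exact h1 (hallz _ hge)
      rw [enc, if_neg h0, hencg]
      have h2 : ((S.jk g' k : ℕ)) + 1 ≤ r := (S.jk g' k).isLt
      have h3 : (S.dk g' k + 1) * r ≤ S.dk g k * r := Nat.mul_le_mul_right r hlt
      have h4 : (S.dk g' k + 1) * r = S.dk g' k * r + r := by ring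
      omega
  apply Finset.sum_lt_sum (fun k' _ => ?_) ⟨k, Finset.mem_univ k, hk⟩
  by_cases hk' : k' = k
  · rw [hk']
    exact le_of_lt hk
  · simp only [enc, dk, jk, hother k' hk']
    exact le_refl _

/-- Case μ < dk g k : all the invariants are preserved. -/
theorem step_preserves {g g' : Polynomial A} {k : Fin r} {μ : ℕ}
    (hEk : S.Ek k g ≠ 0) (hμ : μ < S.dk g k)
    (hother : ∀ k', k' ≠ k → S.Ek k' g' = S.Ek k' g)
    (hhigh : ∀ n, μ < n → (S.Ek k g').coeff n = (S.Ek k g).coeff n) :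
    (∀ l, (S.Ek l g' ≠ 0 ↔ S.Ek l g ≠ 0)) ∧ (∀ l, S.dk g' l = S.dk g l) ∧
      (∀ l, S.jk g' l = S.jk g l) := by
  have hdkk : S.dk g' k = S.dk g k := by
    apply natDegree_eq_of_coeff
    · rw [hhigh _ hμ]
      exact Polynomial.leadingCoeff_ne_zero.mpr hEk
    · intro n hn
      rw [hhigh n (by omega)]
      exact Polynomial.coeff_eq_zero_of_natDegree_lt hn
  have hEkk : S.Ek k g' ≠ 0 := by
    intro h0
    have := hhigh _ hμ
    rw [h0, Polynomial.coeff_zero] at this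
    exact (Polynomial.leadingCoeff_ne_zero.mpr hEk) this.symm
  refine ⟨?_, ?_, ?_⟩
  · intro l
    by_cases hl : l = k
    · rw [hl]
      exact ⟨fun _ => hEk, fun _ => hEkk⟩
    · rw [hother l hl]
  · intro l
    by_cases hl : l = k
    · rw [hl]; exact hdkk
    · unfold dk; rw [hother l hl]
  · intro l
    by_cases hl : l = k
    · rw [hl]
      unfold jk
      rw [hdkk]
    · unfold jk dk
      rw [hother l hl]

theorem viol_iff {g g' : Polynomial A}
    (hC : ∀ l, (S.Ek l g' ≠ 0 ↔ S.Ek l g ≠ 0)) (hd : ∀ l, S.dk g' l = S.dk g l)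
    (hj : ∀ l, S.jk g' l = S.jk g l) {k l : Fin r} {μ : ℕ}
    (hcoeff : (S.Ek k g').coeff μ = (S.Ek k g).coeff μ) :
    (S.Viol g' k l μ ↔ S.Viol g k l μ) := by
  unfold Viol
  rw [hcoeff, hd l, hj l]
  constructor
  · rintro ⟨h1, h2, h3, h4, h5⟩
    exact ⟨h1, (hC l).mp h2, h3, h4, h5⟩
  · rintro ⟨h1, h2, h3, h4, h5⟩
    exact ⟨h1, (hC l).mpr h2, h3, h4, h5⟩

theorem m2_lt {g g' : Polynomial A} {k : Fin r} {μ : ℕ} (hPV : S.PV g k μ)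
    (hEk : S.Ek k g ≠ 0) (hμ : μ < S.dk g k)
    (hother : ∀ k', k' ≠ k → S.Ek k' g' = S.Ek k' g)
    (hhigh : ∀ n, μ < n → (S.Ek k g').coeff n = (S.Ek k g).coeff n)
    (hzero : (S.Ek k g').coeff μ = 0) : S.m2 g' < S.m2 g := by
  obtain ⟨hC, hd, hj⟩ := S.step_preserves hEk hμ hother hhigh
  have hcoeff_other : ∀ k', k' ≠ k → ∀ n, (S.Ek k' g').coeff n = (S.Ek k' g).coeff n := by
    intro k' hk' n
    rw [hother k' hk']
  unfold m2
  -- the sums over k' ≠ k agree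
  have houter : ∀ k', k' ≠ k →
      (∑ μ' ∈ Finset.range (S.dk g' k' + 1), if S.PV g' k' μ' then 2^μ' else 0)
      = ∑ μ' ∈ Finset.range (S.dk g k' + 1), if S.PV g k' μ' then 2^μ' else 0 := by
    intro k' hk'
    rw [hd k']
    apply Finset.sum_congr rfl
    intro μ' _
    have hiff : S.PV g' k' μ' ↔ S.PV g k' μ' := by
      unfold PV
      constructor
      · rintro ⟨l', hV⟩
        exact ⟨l', (S.viol_iff hC hd hj (hcoeff_other k' hk' μ')).mp hV⟩
      · rintro ⟨l', hV⟩
        exact ⟨l', (S.viol_iff hC hd hj (hcoeff_other k' hk' μ')).mpr hV⟩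
    by_cases h : S.PV g k' μ'
    · rw [if_pos h, if_pos (hiff.mpr h)]
    · rw [if_neg h, if_neg (fun hh => h (hiff.mp hh))]
  rw [Finset.sum_eq_sum_sdiff_singleton_add (Finset.mem_univ k),
    Finset.sum_eq_sum_sdiff_singleton_add (Finset.mem_univ k)
      (fun k' => ∑ μ' ∈ Finset.range (S.dk g k' + 1), if S.PV g k' μ' then 2^μ' else 0)]
  have hsame : ∑ k' ∈ Finset.univ \ {k},
      (∑ μ' ∈ Finset.range (S.dk g' k' + 1), if S.PV g' k' μ' then 2^μ' else 0)
      = ∑ k' ∈ Finset.univ \ {k},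
      (∑ μ' ∈ Finset.range (S.dk g k' + 1), if S.PV g k' μ' then 2^μ' else 0) := by
    apply Finset.sum_congr rfl
    intro k' hk'
    have : k' ≠ k := by
      intro h
      rw [Finset.mem_sdiff, Finset.mem_singleton] at hk'
      exact hk'.2 h
    exact houter k' this
  rw [hsame]
  apply Nat.add_lt_add_left
  -- now the inner sums at k
  rw [hd k]
  set d := S.dk g k with hdd
  have hμd : μ + 1 ≤ d + 1 := by omega
  rw [← Finset.sum_range_add_sum_Ico _ hμd,
    ← Finset.sum_range_add_sum_Ico (fun μ' => if S.PV g k μ' then 2^μ' else 0) hμd]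
  have hIco : ∑ μ' ∈ Finset.Ico (μ+1) (d+1), (if S.PV g' k μ' then 2^μ' else 0)
      = ∑ μ' ∈ Finset.Ico (μ+1) (d+1), (if S.PV g k μ' then 2^μ' else 0) := by
    apply Finset.sum_congr rfl
    intro μ' hμ'
    rw [Finset.mem_Ico] at hμ'
    have hcf : (S.Ek k g').coeff μ' = (S.Ek k g).coeff μ' := hhigh μ' (by omega)
    have hiff : S.PV g' k μ' ↔ S.PV g k μ' := by
      unfold PV
      exact ⟨fun ⟨l', hV⟩ => ⟨l', (S.viol_iff hC hd hj hcf).mp hV⟩,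
        fun ⟨l', hV⟩ => ⟨l', (S.viol_iff hC hd hj hcf).mpr hV⟩⟩
    by_cases h : S.PV g k μ'
    · rw [if_pos h, if_pos (hiff.mpr h)]
    · rw [if_neg h, if_neg (fun hh => h (hiff.mp hh))]
  rw [hIco]
  apply Nat.add_lt_add_right
  -- range (μ+1) part
  rw [Finset.sum_range_succ, Finset.sum_range_succ]
  have hnew : (if S.PV g' k μ then 2^μ else 0) = 0 := by
    rw [if_neg]
    rintro ⟨l', hV⟩
    exact hV.1 hzero
  have hold : (if S.PV g k μ then 2^μ else 0) = 2^μ := if_pos hPV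
  rw [hnew, hold, add_zero]
  have hbound : ∑ μ' ∈ Finset.range μ, (if S.PV g' k μ' then 2^μ' else 0)
      ≤ ∑ μ' ∈ Finset.range μ, 2^μ' := by
    apply Finset.sum_le_sum
    intro i _
    split
    · exact le_refl _
    · exact Nat.zero_le _
  have hgeom : ∑ μ' ∈ Finset.range μ, (2:ℕ)^μ' = 2^μ - 1 := sum_two_pow μ
  have h1 : (1:ℕ) ≤ 2^μ := Nat.one_le_two_pow
  have hA : (0:ℕ) ≤ ∑ μ' ∈ Finset.range μ, (if S.PV g k μ' then 2^μ' else 0) := Nat.zero_le _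
  omega

end SkewSetup

namespace SkewSetup

open scoped Classical

variable {F A : Type*} [CommRing F] [CommRing A] [Algebra F A] {r : ℕ}
variable (S : SkewSetup F A r)

theorem red_of_m2_zero {g : Polynomial A} (h : S.m2 g = 0) : S.Red g := by
  intro k l μ hV
  have hμd : μ ≤ S.dk g k := Polynomial.le_natDegree_of_ne_zero hV.1
  have hterm : (if S.PV g k μ then 2^μ else 0) = 2^μ := if_pos ⟨l, hV⟩
  have hsum : ∑ μ' ∈ Finset.range (S.dk g k + 1), (if S.PV g k μ' then 2^μ' else 0) = 0 := by
    have := Finset.sum_eq_zero_iff.mp h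
    exact this k (Finset.mem_univ k)
  have := Finset.sum_eq_zero_iff.mp hsum μ (Finset.mem_range.mpr (by omega))
  rw [hterm] at this
  have : (0:ℕ) < 2^μ := Nat.pow_pos (by omega)
  omega

theorem red_of_m1_zero {g : Polynomial A} (h : S.m1 g = 0) : S.Red g := by
  intro k l μ hV
  have henc := Finset.sum_eq_zero_iff.mp h l (Finset.mem_univ l)
  rw [enc] at henc
  by_cases h0 : S.Ek l g = 0
  · exact hV.2.1 h0
  · rw [if_neg h0] at henc
    omega

theorem toRed : ∀ (n₁ n₂ : ℕ) (g : Polynomial A), S.m1 g ≤ n₁ → S.m2 g ≤ n₂ →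
    ∃ g', S.RSet g' = S.RSet g ∧ S.Red g' := by
  intro n₁
  induction n₁ with
  | zero =>
    intro n₂ g h1 _
    exact ⟨g, rfl, S.red_of_m1_zero (Nat.le_zero.mp h1)⟩
  | succ n₁ ih₁ =>
    intro n₂
    induction n₂ with
    | zero =>
      intro g h1 h2
      exact ⟨g, rfl, S.red_of_m2_zero (Nat.le_zero.mp h2)⟩
    | succ n₂ ih₂ =>
      intro g h1 h2
      by_cases hred : S.Red g
      · exact ⟨g, rfl, hred⟩
      · unfold Red at hred
        push_neg at hred
        obtain ⟨k, l, μ, hV⟩ := hred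
        obtain ⟨g', hRS, hother, hhigh, hzero⟩ := S.step hV
        have hEk : S.Ek k g ≠ 0 := S.Ek_ne_zero_of_viol hV
        have hμd : μ ≤ S.dk g k := Polynomial.le_natDegree_of_ne_zero hV.1
        rcases eq_or_lt_of_le hμd with heq | hlt
        · -- μ = dk g k : m1 drops
          have hm1 : S.m1 g' < S.m1 g := S.m1_lt hEk heq hother hhigh hzero
          obtain ⟨g'', hRS'', hred''⟩ := ih₁ (S.m2 g') g' (by omega) le_rfl
          exact ⟨g'', by rw [hRS'', hRS], hred''⟩
        · -- μ < dk g k : m1 same, m2 drops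
          have hm2 : S.m2 g' < S.m2 g := S.m2_lt ⟨l, hV⟩ hEk hlt hother hhigh hzero
          have hm1 : S.m1 g' = S.m1 g := by
            obtain ⟨hC, hd, hj⟩ := S.step_preserves hEk hlt hother hhigh
            unfold m1
            apply Finset.sum_congr rfl
            intro k' _
            unfold enc
            rw [hd k', hj k']
            by_cases h0 : S.Ek k' g = 0
            · rw [if_pos h0, if_pos (by
                by_contra hne
                exact ((hC k').mp hne) h0)]
            · rw [if_neg h0, if_neg (by
                intro hz
                exact ((hC k').mpr h0) hz)]
          obtain ⟨g'', hRS'', hred''⟩ := ih₂ g' (by omega) (by omega)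
          exact ⟨g'', by rw [hRS'', hRS], hred''⟩

theorem exists_red_nor (g₀ : Polynomial A) :
    ∃ g, S.RSet g = S.RSet g₀ ∧ S.Red g ∧ S.Nor g := by
  obtain ⟨g1, hR1, hred1⟩ := S.toRed (S.m1 g₀) (S.m2 g₀) g₀ le_rfl le_rfl
  obtain ⟨g2, hR2, hiff, hnor2⟩ := S.normalize (g := g1)
  exact ⟨g2, by rw [hR2, hR1], S.red_transfer hiff hred1, hnor2⟩

end SkewSetup

namespace SkewSetup

variable {F A : Type*} [CommRing F] [CommRing A] [Algebra F A] {r : ℕ}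
variable (S : SkewSetup F A r)

theorem Ek_def (k : Fin r) (g : Polynomial A) :
    skewMul S.σ (Polynomial.C (S.e k)) g = S.Ek k g := rfl

theorem nor_iff (g : Polynomial A) : S.Nor g ↔ Normalized S.σ S.e g := by
  constructor
  · intro h k hk
    rw [S.Ek_def] at hk ⊢
    exact ⟨S.jk g k, h k hk⟩
  · intro h k hk
    obtain ⟨j, hj⟩ := h k (by rw [S.Ek_def]; exact hk)
    rw [S.Ek_def] at hj
    have hne : (S.Ek k g).leadingCoeff ≠ 0 := Polynomial.leadingCoeff_ne_zero.mpr hk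
    have hjj : j = S.jk g k :=
      S.comp_eq (x := (S.Ek k g).leadingCoeff)
        (by rw [hj, S.hidem j, ← hj]; exact hne) (S.lc_pure k g)
    rw [hj, hjj]

theorem e_mul_eq_zero {a b : Fin r} {x : A} (ha : S.e a * x = x) (hb : b ≠ a) :
    S.e b * x = 0 := by
  calc S.e b * x = S.e b * (S.e a * x) := by rw [ha]
    _ = (S.e b * S.e a) * x := by ring
    _ = 0 := by rw [S.horth hb, zero_mul]

theorem red_iff (g : Polynomial A) : S.Red g ↔ LeftReduced S.σ S.e g := by
  constructor
  · intro hred k l hkl h1 h2 μ j hj m hLM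
    rintro ⟨h, hh⟩
    rw [S.Ek_def] at h1 h2 hj hh
    have hcne : (S.Ek k g).coeff μ ≠ 0 := by
      intro h0
      rw [h0, mul_zero] at hj
      exact hj rfl
    have hjπ : j = (S.π ^ μ) k := S.comp_eq hj (S.Ek_pure k g μ)
    have hejc : S.e j * (S.Ek k g).coeff μ = (S.Ek k g).coeff μ := by
      rw [hjπ]
      exact S.Ek_pure k g μ
    obtain ⟨j₀, hm, hj₀, _⟩ := hLM
    rw [S.Ek_def] at hj₀
    have hj₀jk : j₀ = S.jk g l := S.comp_eq hj₀ (S.lc_pure l g)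
    have hhc := congrArg (fun p => Polynomial.coeff p μ) hh
    rw [hm, Polynomial.coeff_monomial, if_pos rfl, coeff_skewMul_monomial_right] at hhc
    by_cases hdμ : (skewMul S.σ (Polynomial.C (S.e l)) g).natDegree ≤ μ
    · rw [if_pos hdμ, hejc] at hhc
      have hce : (S.Ek k g).coeff μ * S.e j₀ = (S.Ek k g).coeff μ := by
        calc (S.Ek k g).coeff μ * S.e j₀
            = ((S.σ ^ (skewMul S.σ (Polynomial.C (S.e l)) g).natDegree)
                (h.coeff (μ - (skewMul S.σ (Polynomial.C (S.e l)) g).natDegree)) * S.e j₀)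
              * S.e j₀ := by rw [← hhc]
          _ = (S.σ ^ (skewMul S.σ (Polynomial.C (S.e l)) g).natDegree)
                (h.coeff (μ - (skewMul S.σ (Polynomial.C (S.e l)) g).natDegree))
              * (S.e j₀ * S.e j₀) := by ring
          _ = _ := by rw [S.hidem, hhc]
      have hπμ : (S.π ^ μ) k = j₀ :=
        S.comp_eq (x := (S.Ek k g).coeff μ)
          (by rw [S.Ek_pure]; exact hcne) (by rw [mul_comm]; exact hce)
      have hdμ' : S.dk g l ≤ μ := hdμ
      exact hred k l μ ⟨hcne, h2, hdμ', by rw [hπμ, hj₀jk], hkl⟩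
    · rw [if_neg hdμ, hejc] at hhc
      exact hcne hhc
  · intro hLR k l μ hV
    obtain ⟨hc, hEl, hdμ, hπ, hkl⟩ := hV
    have hEk : S.Ek k g ≠ 0 := S.Ek_ne_zero_of_viol ⟨hc, hEl, hdμ, hπ, hkl⟩
    have hisLM : IsLM S.e (skewMul S.σ (Polynomial.C (S.e l)) g)
        (Polynomial.monomial (S.dk g l) (S.e (S.jk g l))) := by
      refine ⟨S.jk g l, ?_, ?_, ?_⟩
      · rw [S.Ek_def]
        rfl
      · rw [S.Ek_def, S.lc_pure]
        exact Polynomial.leadingCoeff_ne_zero.mpr hEl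
      · intro l' hl'
        rw [S.Ek_def]
        exact S.e_mul_eq_zero (S.lc_pure l g) (ne_of_gt hl')
    apply hLR k l hkl (by rw [S.Ek_def]; exact hEk) (by rw [S.Ek_def]; exact hEl) μ ((S.π ^ μ) k)
      (by rw [S.Ek_def, S.Ek_pure]; exact hc)
      (Polynomial.monomial (S.dk g l) (S.e (S.jk g l))) hisLM
    refine ⟨Polynomial.monomial (μ - S.dk g l) ((S.σ ^ (S.dk g l)).symm ((S.Ek k g).coeff μ)), ?_⟩
    rw [S.Ek_def, S.Ek_pure, skewMul_monomial_monomial, AlgEquiv.apply_symm_apply]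
    have h9 : (S.Ek k g).coeff μ * S.e (S.jk g l) = (S.Ek k g).coeff μ := by
      rw [mul_comm, ← hπ]
      exact S.Ek_pure k g μ
    rw [h9, show μ - S.dk g l + S.dk g l = μ by omega]

end SkewSetup


variable {F : Type} [Field F] {r : ℕ} {K : Fin r → Type}
  [∀ k, Field (K k)] [∀ k, Algebra F (K k)]

theorem coord_idem (x : ∀ k, K k) (h : x * x = x) (i : Fin r) : x i = 0 ∨ x i = 1 := by
  have hi : x i * x i = x i := by
    have := congrFun h i
    simpa using this
  by_cases h0 : x i = 0
  · exact Or.inl h0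
  · exact Or.inr (mul_right_cancel₀ h0 (by rw [hi, one_mul]))

theorem single_mul_single (j k : Fin r) (hjk : j ≠ k) :
    (Pi.single j 1 : ∀ k, K k) * Pi.single k 1 = 0 := by
  funext i
  simp only [Pi.mul_apply, Pi.zero_apply]
  by_cases hij : i = j
  · subst hij
    rw [Pi.single_eq_of_ne hjk 1, mul_zero]
  · rw [Pi.single_eq_of_ne hij, zero_mul]

theorem single_idem (k : Fin r) :
    (Pi.single k 1 : ∀ k, K k) * Pi.single k 1 = Pi.single k 1 := by
  funext i
  simp only [Pi.mul_apply]
  by_cases hik : i = k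
  · subst hik
    rw [Pi.single_eq_same, mul_one]
  · rw [Pi.single_eq_of_ne hik, zero_mul]

theorem sum_single : (∑ k, (Pi.single k 1 : ∀ k, K k)) = 1 := by
  funext i
  rw [Finset.sum_apply]
  rw [Finset.sum_eq_single_of_mem i (Finset.mem_univ i)]
  · simp
  · intro j _ hj
    exact Pi.single_eq_of_ne (Ne.symm hj) 1

theorem single_ne_zero' (k : Fin r) : (Pi.single k 1 : ∀ k, K k) ≠ 0 := by
  intro h
  have := congrFun h k
  simp at this

theorem single_inv (j : Fin r) (x : ∀ k, K k) (hp : Pi.single j 1 * x = x) (hx : x ≠ 0) :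
    ∃ y, Pi.single j 1 * y = y ∧ y * x = (Pi.single j 1 : ∀ k, K k) := by
  have hcoord : ∀ i, i ≠ j → x i = 0 := by
    intro i hij
    have := congrFun hp i
    simp only [Pi.mul_apply] at this
    rw [Pi.single_eq_of_ne hij, zero_mul] at this
    exact this.symm
  have hxj : x j ≠ 0 := by
    intro h0
    apply hx
    funext i
    by_cases hij : i = j
    · rw [hij, h0]; rfl
    · rw [hcoord i hij]; rfl
  refine ⟨Pi.single j (x j)⁻¹, ?_, ?_⟩
  · funext i
    simp only [Pi.mul_apply]
    by_cases hij : i = j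
    · subst hij
      rw [Pi.single_eq_same, one_mul]
    · rw [Pi.single_eq_of_ne hij, zero_mul, Pi.single_eq_of_ne hij]
  · funext i
    simp only [Pi.mul_apply]
    by_cases hij : i = j
    · subst hij
      rw [Pi.single_eq_same, Pi.single_eq_same, inv_mul_cancel₀ hxj]
    · rw [Pi.single_eq_of_ne hij, zero_mul, Pi.single_eq_of_ne hij]

theorem exists_perm (σ : (∀ k, K k) ≃ₐ[F] (∀ k, K k)) :
    ∃ π : Equiv.Perm (Fin r), ∀ k, σ (Pi.single k 1) = Pi.single (π k) 1 := by
  classical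
  have hidem : ∀ k, σ (Pi.single k 1) * σ (Pi.single k 1) = σ (Pi.single k 1) := by
    intro k
    rw [← map_mul, single_idem]
  have hex : ∀ j : Fin r, ∃ k, σ (Pi.single k 1) j ≠ 0 := by
    intro j
    by_contra hall
    push_neg at hall
    have hsum1 : (∑ k, σ (Pi.single k 1)) = 1 := by
      rw [← map_sum, sum_single, map_one]
    have := congrFun hsum1 j
    rw [Finset.sum_apply] at this
    rw [Finset.sum_eq_zero (fun k _ => hall k)] at this
    simp only [Pi.one_apply] at this
    exact one_ne_zero this.symm
  have huniq : ∀ j k k', σ (Pi.single k 1) j ≠ 0 → σ (Pi.single k' 1) j ≠ 0 → k = k' := by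
    intro j k k' hk hk'
    by_contra hne
    have h0 : σ (Pi.single k 1) * σ (Pi.single k' 1) = 0 := by
      rw [← map_mul, single_mul_single k k' hne, map_zero]
    have := congrFun h0 j
    simp only [Pi.mul_apply, Pi.zero_apply] at this
    rcases mul_eq_zero.mp this with h | h
    · exact hk h
    · exact hk' h
  set ρ : Fin r → Fin r := fun j => Classical.choose (hex j) with hρ
  have hρ1 : ∀ j, σ (Pi.single (ρ j) 1) j ≠ 0 := fun j => Classical.choose_spec (hex j)
  have hρsurj : Function.Surjective ρ := by
    intro k
    have hne : σ (Pi.single k 1) ≠ 0 := by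
      intro h
      exact single_ne_zero' k (by
        apply σ.injective
        rw [h, map_zero])
    have hj : ∃ j, σ (Pi.single k 1) j ≠ 0 := by
      by_contra hall
      push_neg at hall
      exact hne (funext hall)
    obtain ⟨j, hj⟩ := hj
    exact ⟨j, huniq j (ρ j) k (hρ1 j) hj⟩
  have hρbij : Function.Bijective ρ :=
    ⟨Finite.injective_iff_surjective.mpr hρsurj, hρsurj⟩
  set πe := Equiv.ofBijective ρ hρbij with hπedef
  refine ⟨πe.symm, ?_⟩
  intro k
  have hρπ : ρ (πe.symm k) = k := πe.apply_symm_apply k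
  funext j
  rcases coord_idem _ (hidem k) j with h0 | h1
  · have hjne : j ≠ πe.symm k := by
      intro hj
      apply hρ1 j
      have hk : ρ j = k := by rw [hj]; exact hρπ
      rw [hk]
      exact h0
    rw [h0, Pi.single_eq_of_ne hjne]
  · have hkρ : k = ρ j := huniq j k (ρ j) (by rw [h1]; exact one_ne_zero) (hρ1 j)
    have hjeq : πe.symm k = j := by
      rw [hkρ]
      exact πe.symm_apply_apply j
    rw [h1, ← hjeq, Pi.single_eq_same]

/-- every delay-free principal left ideal of R = A[z;σ] (A a finite product
of field extensions of F) has a unique left-reduced and normalized generator. -/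
theorem stmt_10 (F : Type) [Field F] (r : ℕ) (K : Fin r → Type)
    [∀ k, Field (K k)] [∀ k, Algebra F (K k)]
    (σ : (∀ k, K k) ≃ₐ[F] (∀ k, K k))
    (e : Fin r → (∀ k, K k)) (he : ∀ k, e k = Pi.single k 1)
    (J : Set (Polynomial (∀ k, K k)))
    (hzero : (0 : Polynomial (∀ k, K k)) ∈ J)
    (hadd : ∀ a ∈ J, ∀ b ∈ J, a + b ∈ J)
    (hmul : ∀ (f : Polynomial (∀ k, K k)), ∀ a ∈ J, skewMul σ f a ∈ J)
    (hdf : ∀ (k : ℕ) (a : Polynomial (∀ k, K k)),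
        skewMul σ (Polynomial.X ^ k) a ∈ J → a ∈ J)
    (hprinc : ∃ g : Polynomial (∀ k, K k), J = {f | ∃ u, f = skewMul σ u g}) :
    ∃! g : Polynomial (∀ k, K k),
      J = {f | ∃ u, f = skewMul σ u g} ∧ LeftReduced σ e g ∧ Normalized σ e g := by
  classical
  obtain ⟨π, hπe'⟩ := exists_perm σ
  have hπe : ∀ k, σ (e k) = e (π k) := by
    intro k
    rw [he k, he (π k)]
    exact hπe' k
  set S : SkewSetup F (∀ k, K k) r :=
    { σ := σ, e := e, π := π,
      horth := by
        intro j k hjk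
        rw [he j, he k]
        exact single_mul_single j k hjk,
      hsum := (Finset.sum_congr rfl (fun k _ => he k)).trans sum_single,
      hσe := hπe,
      hinv := by
        intro j x hp hx
        rw [he j] at hp ⊢
        exact single_inv j x hp hx } with hS
  obtain ⟨g₀, hJ⟩ := hprinc
  have hJR : J = S.RSet g₀ := hJ
  obtain ⟨g, hRg, hred, hnor⟩ := S.exists_red_nor g₀
  refine ⟨g, ⟨?_, (S.red_iff g).mp hred, (S.nor_iff g).mp hnor⟩, ?_⟩
  · rw [hJR, ← hRg]
    rfl
  · rintro y ⟨hyJ, hyred, hynor⟩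
    apply S.uniq ?_ ((S.red_iff y).mpr hyred) ((S.nor_iff y).mpr hynor) hred hnor
    have h1 : S.RSet y = J := hyJ.symm
    rw [h1, hJR, ← hRg]
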